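/- Let Σ be a finite alphabet containing the symbols 0, 1 and $, let G be a 1D SLP deriving a string W over Σ, and let B be a finite set of nonempty binary strings (strings over {0,1}) such that for every b ∈ B the string $b$ (b surrounded by one $ on each side) occurs as a substring of W. Then the number of nonterminals of G is at least |B|. -/

import Mathlib

/-!
## Two-dimensional strings.
A 2D string over alphabet `A` of size `h × w` is represented canonically:
`f i j` is `some` of the character in (0-indexed) row `i`, column `j` when
`i < h` and `j < w`, and `none` outside of the rectangle.  All operations
below produce such canonical representations, so equality of 2D strings
built from them coincides with equality of the dimensions and of all entries.
-/
structure Str2 (A : Type) where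
  h : ℕ
  w : ℕ
  f : ℕ → ℕ → Option A

namespace Str2

variable {A : Type}

/-- Canonical constructor: pads with `none` outside of the `h × w` rectangle. -/
def mk' (h w : ℕ) (g : ℕ → ℕ → Option A) : Str2 A :=
  ⟨h, w, fun i j => if i < h ∧ j < w then g i j else none⟩

/-- The empty 2D string. -/
def empty : Str2 A := ⟨0, 0, fun _ _ => none⟩

/-- The `1 × 1` 2D string consisting of a single character. -/
def single (a : A) : Str2 A := mk' 1 1 fun _ _ => some a

/-- Horizontal concatenation `S ⊞ T` (meaningful when the heights agree). -/
def hcat (S T : Str2 A) : Str2 A :=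
  mk' S.h (S.w + T.w) fun i j => if j < S.w then S.f i j else T.f i (j - S.w)

/-- Vertical concatenation `S ⊟ T` (meaningful when the widths agree). -/
def vcat (S T : Str2 A) : Str2 A :=
  mk' (S.h + T.h) S.w fun i j => if i < S.h then S.f i j else T.f (i - S.h) j

/-- Horizontal concatenation `S₁ ⊞ S₂ ⊞ ⋯ ⊞ S_k` of a list of 2D strings. -/
def hcatList : List (Str2 A) → Str2 A
  | [] => empty
  | S :: rest => rest.foldl hcat S

/-- Vertical concatenation `S₁ ⊟ S₂ ⊟ ⋯ ⊟ S_k` of a list of 2D strings. -/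
def vcatList : List (Str2 A) → Str2 A
  | [] => empty
  | S :: rest => rest.foldl vcat S

/-- The transpose. -/
def transpose (S : Str2 A) : Str2 A := mk' S.w S.h fun i j => S.f j i

/-- The `i`-th row (0-indexed) of `S`, as a `1 × w` 2D string. -/
def rowStr (S : Str2 A) (i : ℕ) : Str2 A := mk' 1 S.w fun _ j => S.f i j

/-- The `j`-th column (0-indexed) of `S`, read top to bottom, as a `1 × h` 2D string. -/
def colStr (S : Str2 A) (j : ℕ) : Str2 A := mk' 1 S.h fun _ i => S.f i j

/-- A height-one 2D string, viewed as an ordinary (1D) string, i.e. a list. -/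
def toList (S : Str2 A) : List A := (List.range S.w).filterMap fun j => S.f 0 j

/-- An ordinary (1D) string viewed as a height-one 2D string. -/
def ofList (l : List A) : Str2 A := mk' 1 l.length fun _ j => l[j]?

/-- The concatenation of all rows of `S` from top to bottom,
as a height-one 2D string of width `h * w`. -/
def rowsConcat (S : Str2 A) : Str2 A :=
  mk' 1 (S.h * S.w) fun _ j => S.f (j / S.w) (j % S.w)

end Str2

/-- The right-hand side of a production of a 2D SLP: a single character,
a horizontal concatenation of two nonterminals, or a vertical concatenation
of two nonterminals. -/
inductive Rhs2 (A V : Type) where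
  | chr : A → Rhs2 A V
  | horiz : V → V → Rhs2 A V
  | vert : V → V → Rhs2 A V

/-- A two-dimensional straight-line program over the alphabet `A`:
a finite set `V` of nonterminals, a starting nonterminal, and a production
map `rhs`.  Acyclicity of the relation "appears in the right-hand side of"
is witnessed by the function `rank`, which strictly decreases from the
left-hand side of each production to the nonterminals on its right-hand side. -/
structure SLP2 (A : Type) where
  V : Type
  fintypeV : Fintype V
  start : V
  rhs : V → Rhs2 A V
  rank : V → ℕ
  rank_horiz : ∀ {X Y Z}, rhs X = Rhs2.horiz Y Z → rank Y < rank X ∧ rank Z < rank X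
  rank_vert : ∀ {X Y Z}, rhs X = Rhs2.vert Y Z → rank Y < rank X ∧ rank Z < rank X

namespace SLP2

variable {A : Type}

/-- Fuel-based evaluation of expansions (with enough fuel it computes the
unique expansion of a nonterminal). -/
def expAux (G : SLP2 A) : ℕ → G.V → Str2 A
  | 0, _ => Str2.empty
  | n + 1, X =>
    match G.rhs X with
    | .chr a => Str2.single a
    | .horiz Y Z => (G.expAux n Y).hcat (G.expAux n Z)
    | .vert Y Z => (G.expAux n Y).vcat (G.expAux n Z)

/-- The (unique) expansion of a nonterminal `X`: since `rank` strictly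
decreases along productions, fuel `rank X + 1` always suffices. -/
def expNT (G : SLP2 A) (X : G.V) : Str2 A := G.expAux (G.rank X + 1) X

/-- The 2D string derived by the SLP. -/
def exp (G : SLP2 A) : Str2 A := G.expNT G.start

/-- Fuel-based computation of the depth of the derivation tree below a
nonterminal (a node labeled by a production `chr σ` has a single leaf child). -/
def depthAux (G : SLP2 A) : ℕ → G.V → ℕ
  | 0, _ => 0
  | n + 1, X =>
    match G.rhs X with
    | .chr _ => 1
    | .horiz Y Z => 1 + max (G.depthAux n Y) (G.depthAux n Z)
    | .vert Y Z => 1 + max (G.depthAux n Y) (G.depthAux n Z)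

/-- The depth of the derivation tree below nonterminal `X`. -/
def depthNT (G : SLP2 A) (X : G.V) : ℕ := G.depthAux (G.rank X + 1) X

/-- The depth of the SLP: the depth of its derivation tree. -/
def depth (G : SLP2 A) : ℕ := G.depthNT G.start

/-- The size of the SLP: the total number of symbols on the right-hand
sides of all productions. -/
def size (G : SLP2 A) : ℕ :=
  letI := G.fintypeV
  ∑ X : G.V, (match G.rhs X with
    | .chr _ => 1
    | .horiz _ _ => 2
    | .vert _ _ => 2)

/-- The number of nonterminals of the SLP. -/
def numNT (G : SLP2 A) : ℕ :=
  letI := G.fintypeV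
  Fintype.card G.V

/-- Well-formedness: dimensions match in every production, i.e. in a
horizontal concatenation both arguments have equal heights, and in a
vertical concatenation both arguments have equal widths. -/
def WF (G : SLP2 A) : Prop :=
  ∀ X : G.V,
    match G.rhs X with
    | .chr _ => True
    | .horiz Y Z => (G.expNT Y).h = (G.expNT Z).h
    | .vert Y Z => (G.expNT Y).w = (G.expNT Z).w

/-- A 1D SLP: a 2D SLP that uses only horizontal concatenations and derives
a string of height `1`. -/
def OneDim (G : SLP2 A) : Prop :=
  (∀ X Y Z, G.rhs X ≠ Rhs2.vert Y Z) ∧ (G.exp).h = 1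

end SLP2
/-- The alphabet `{0, 1, $}`. -/
inductive Alpha3 : Type where
  | zero : Alpha3
  | one : Alpha3
  | dollar : Alpha3
deriving DecidableEq

instance : Fintype Alpha3 :=
  ⟨{Alpha3.zero, Alpha3.one, Alpha3.dollar}, fun x => by cases x <;> simp⟩

/-- For `N = 2^n`, the 2D string `Bin_N` of size `N × (n+2)` whose `i`-th row
(1-indexed) is the `n`-bit binary representation (most significant bit first)
of `i - 1`, surrounded by one `$` symbol on each side. -/
def binStr (n : ℕ) : Str2 Alpha3 :=
  Str2.mk' (2 ^ n) (n + 2) fun i j =>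
    some (if j = 0 ∨ j = n + 1 then Alpha3.dollar
      else if Nat.testBit i (n - j) then Alpha3.one else Alpha3.zero)

/-- For `N = 2^n`, the 2D string `ShiftBin_N` of size `2N × N(n+2)`: for every
`i ∈ [0..N-1]`, the columns `i(n+2)+1` through `(i+1)(n+2)` (1-indexed) consist
of `i` rows filled with `0`'s, followed by a copy of `Bin_N`, followed by
`N - i` rows filled with `0`'s. -/
def shiftBinStr (n : ℕ) : Str2 Alpha3 :=
  Str2.mk' (2 * 2 ^ n) (2 ^ n * (n + 2)) fun r c =>
    let i := c / (n + 2)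
    if i ≤ r ∧ r < i + 2 ^ n then (binStr n).f (r - i) (c % (n + 2)) else some Alpha3.zero

/-- A binary string `b`, surrounded by one `$` symbol on each side, as a string
over an alphabet with distinguished symbols `z` (zero), `o` (one), `d` (dollar). -/
def dollarWrap {A : Type} (z o d : A) (b : List Bool) : List A :=
  d :: (b.map fun x => if x then o else z) ++ [d]

/-- The exponent of `M'`: the largest `m` such that `M' = 2^m` satisfies
`M' * (log₂ M' + 2) ≤ M / 2`, i.e. `2 * 2^m * (m + 2) ≤ M`. -/
def mExp (M : ℕ) : ℕ := Nat.findGreatest (fun m => 2 * 2 ^ m * (m + 2) ≤ M) M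

/-- The 2D string `C_{N,M}` of size `N × M`: with `M'` the largest power of two
such that `M' * (log₂ M' + 2) ≤ M / 2` and `B = ShiftBin_{M'}` (of size
`2M' × M'(log₂ M' + 2)`), it consists of a left block of `⌊N/(2M')⌋` vertically
concatenated copies of `B` padded below with `0`'s to height `N`; to its right,
a right block of `M'` rows of `0`'s followed by `⌊(N-M')/(2M')⌋` vertically
concatenated copies of `B`, padded below with `0`'s to height `N`; and columns
of `0`'s padding the total width to `M`. -/
def gadgetC (N M : ℕ) : Str2 Alpha3 :=
  let n := mExp M
  let M' := 2 ^ n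
  let W := M' * (n + 2)
  Str2.mk' N M fun r c =>
    if c < W then
      (if r < 2 * M' * (N / (2 * M')) then (shiftBinStr n).f (r % (2 * M')) c
       else some Alpha3.zero)
    else if c < 2 * W then
      (if M' ≤ r ∧ r < M' + 2 * M' * ((N - M') / (2 * M'))
       then (shiftBinStr n).f ((r - M') % (2 * M')) (c - W)
       else some Alpha3.zero)
    else some Alpha3.zero


/-! ### Auxiliary development for Statement 6 -/

noncomputable section

namespace Aux6

variable {A : Type}

open Classical in
/-- decidable-by-classical binarity predicate -/
def isBin (z o : A) (a : A) : Bool := decide (a = z ∨ a = o)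

lemma takeWhile_append_all (p : A → Bool) (l₁ l₂ : List A) (h : ∀ x ∈ l₁, p x) :
    (l₁ ++ l₂).takeWhile p = l₁ ++ l₂.takeWhile p := by
  induction l₁ with
  | nil => simp
  | cons a t ih =>
      simp only [List.cons_append, List.takeWhile_cons]
      rw [h a (by simp), ih (fun x hx => h x (by simp [hx]))]
      simp

lemma takeWhile_cons_false (p : A → Bool) (a : A) (l : List A) (h : p a = false) :
    (a :: l).takeWhile p = [] := by
  simp [List.takeWhile_cons, h]

lemma toList_ofList (l : List A) : (Str2.ofList l).toList = l := by
  have key : ∀ (n : ℕ) (l : List A), l.length = n →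
      ((List.range n).filterMap fun j => l[j]?) = l := by
    intro n
    induction n with
    | zero => intro l hl; simp [List.length_eq_zero_iff.mp hl]
    | succ n ih =>
        intro l hl
        rcases l with _ | ⟨a, t⟩
        · simp at hl
        · rw [List.range_succ_eq_map]
          simp only [List.filterMap_cons, List.getElem?_cons_zero,
            List.filterMap_map]
          have hfun : ((fun j => (a :: t)[j]?) ∘ Nat.succ) = fun j => t[j]? := by
            funext j; simp [Function.comp]
          rw [hfun, ih t (by simpa using hl)]
  simp only [Str2.toList, Str2.ofList, Str2.mk']
  have : ∀ j ∈ List.range l.length, (if 0 < 1 ∧ j < l.length then l[j]? else none) = l[j]? := by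
    intro j hj; simp [List.mem_range.mp hj]
  rw [List.filterMap_congr this]
  exact key l.length l rfl

lemma ofList_single (a : A) : Str2.single a = Str2.ofList [a] := by
  simp only [Str2.single, Str2.ofList, Str2.mk', List.length_singleton]
  congr 1
  funext i j
  by_cases h : i < 1 ∧ j < 1
  · rw [if_pos h, if_pos h]
    simp [show j = 0 by omega]
  · rw [if_neg h, if_neg h]

lemma ofList_hcat (l m : List A) :
    Str2.hcat (Str2.ofList l) (Str2.ofList m) = Str2.ofList (l ++ m) := by
  simp only [Str2.hcat, Str2.ofList, Str2.mk', List.length_append]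
  congr 1
  funext i j
  by_cases hi : i < 1
  · by_cases hj : j < l.length + m.length
    · by_cases hjl : j < l.length
      · rw [if_pos ⟨hi, hj⟩, if_pos hjl, if_pos ⟨hi, hjl⟩, if_pos (by omega)]
        exact (List.getElem?_append_left hjl).symm
      · rw [if_pos ⟨hi, hj⟩, if_neg hjl, if_pos ⟨hi, by omega⟩, if_pos (by omega)]
        exact (List.getElem?_append_right (by omega)).symm
    · rw [if_neg (by omega), if_neg (by omega)]
  · rw [if_neg (by omega), if_neg (by omega)]

variable (G : SLP2 A)

lemma expAux_congr : ∀ (k : ℕ) (X : G.V) (n m : ℕ), G.rank X ≤ k →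
    G.rank X < n → G.rank X < m → G.expAux n X = G.expAux m X := by
  intro k
  induction k with
  | zero =>
      intro X n m hk hn hm
      obtain ⟨n, rfl⟩ := Nat.exists_eq_succ_of_ne_zero (by omega : n ≠ 0)
      obtain ⟨m, rfl⟩ := Nat.exists_eq_succ_of_ne_zero (by omega : m ≠ 0)
      rcases h : G.rhs X with a | ⟨Y, Z⟩ | ⟨Y, Z⟩
      · simp only [SLP2.expAux, h]
      · exact absurd ((G.rank_horiz h).1) (by omega)
      · exact absurd ((G.rank_vert h).1) (by omega)
  | succ k ih =>
      intro X n m hk hn hm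
      obtain ⟨n, rfl⟩ := Nat.exists_eq_succ_of_ne_zero (by omega : n ≠ 0)
      obtain ⟨m, rfl⟩ := Nat.exists_eq_succ_of_ne_zero (by omega : m ≠ 0)
      rcases h : G.rhs X with a | ⟨Y, Z⟩ | ⟨Y, Z⟩
      · simp only [SLP2.expAux, h]
      · obtain ⟨h1, h2⟩ := G.rank_horiz h
        simp only [SLP2.expAux, h]
        rw [ih Y n m (by omega) (by omega) (by omega),
            ih Z n m (by omega) (by omega) (by omega)]
      · obtain ⟨h1, h2⟩ := G.rank_vert h
        simp only [SLP2.expAux, h]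
        rw [ih Y n m (by omega) (by omega) (by omega),
            ih Z n m (by omega) (by omega) (by omega)]

lemma expAux_eq (X : G.V) (n : ℕ) (hn : G.rank X < n) : G.expAux n X = G.expNT X :=
  expAux_congr G (G.rank X) X n (G.rank X + 1) le_rfl hn (by omega)

lemma expNT_chr {X : G.V} {a : A} (h : G.rhs X = Rhs2.chr a) :
    G.expNT X = Str2.single a := by
  simp only [SLP2.expNT, SLP2.expAux, h]

lemma expNT_horiz {X Y Z : G.V} (h : G.rhs X = Rhs2.horiz Y Z) :
    G.expNT X = (G.expNT Y).hcat (G.expNT Z) := by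
  obtain ⟨h1, h2⟩ := G.rank_horiz h
  have e : G.expNT X = (G.expAux (G.rank X) Y).hcat (G.expAux (G.rank X) Z) := by
    simp only [SLP2.expNT, SLP2.expAux, h]
  rw [e, expAux_eq G Y _ h1, expAux_eq G Z _ h2]

/-- every nonterminal of a vert-free SLP expands to a 1D string -/
lemma expNT_eq_ofList (hv : ∀ X Y Z : G.V, G.rhs X ≠ Rhs2.vert Y Z) :
    ∀ (k : ℕ) (X : G.V), G.rank X ≤ k → G.expNT X = Str2.ofList (G.expNT X).toList := by
  intro k
  induction k with
  | zero =>
      intro X hk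
      rcases h : G.rhs X with a | ⟨Y, Z⟩ | ⟨Y, Z⟩
      · rw [expNT_chr G h, ofList_single, toList_ofList]
      · exact absurd ((G.rank_horiz h).1) (by omega)
      · exact absurd h (hv X Y Z)
  | succ k ih =>
      intro X hk
      rcases h : G.rhs X with a | ⟨Y, Z⟩ | ⟨Y, Z⟩
      · rw [expNT_chr G h, ofList_single, toList_ofList]
      · obtain ⟨h1, h2⟩ := G.rank_horiz h
        rw [expNT_horiz G h, ih Y (by omega), ih Z (by omega), ofList_hcat, toList_ofList]
      · exact absurd h (hv X Y Z)

/-- the derived 1D string of a nonterminal -/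
def L (X : G.V) : List A := (G.expNT X).toList

lemma L_chr (hv : ∀ X Y Z : G.V, G.rhs X ≠ Rhs2.vert Y Z)
    {X : G.V} {a : A} (h : G.rhs X = Rhs2.chr a) : L G X = [a] := by
  rw [L, expNT_chr G h, ofList_single, toList_ofList]

lemma L_horiz (hv : ∀ X Y Z : G.V, G.rhs X ≠ Rhs2.vert Y Z)
    {X Y Z : G.V} (h : G.rhs X = Rhs2.horiz Y Z) : L G X = L G Y ++ L G Z := by
  rw [L, expNT_horiz G h,
    expNT_eq_ofList G hv (G.rank Y) Y le_rfl, expNT_eq_ofList G hv (G.rank Z) Z le_rfl,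
    ofList_hcat, toList_ofList]
  rfl

lemma infix_of_append_left {u v s m t : List A} (h : u ++ v = s ++ m ++ t)
    (hl : s.length + m.length ≤ u.length) : m <:+: u := by
  have h1 : u = (s ++ m ++ t).take u.length := by rw [← h, List.take_left]
  rw [List.append_assoc, List.take_append,
      List.take_of_length_le (by omega), List.take_append,
      List.take_of_length_le (by omega)] at h1
  exact ⟨s, t.take (u.length - s.length - m.length), by rw [h1]; simp [List.append_assoc]⟩

lemma infix_of_append_right {u v s m t : List A} (h : u ++ v = s ++ m ++ t)
    (hr : u.length ≤ s.length) : m <:+: v := by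
  have h1 : v = (s ++ m ++ t).drop u.length := by rw [← h, List.drop_left]
  rw [List.append_assoc, List.drop_append,
      Nat.sub_eq_zero_of_le hr, List.drop_zero] at h1
  exact ⟨s.drop u.length, t, by rw [h1]; simp [List.append_assoc]⟩

lemma isBin_d_false {z o d : A} (hzd : z ≠ d) (hod : o ≠ d) : isBin z o d = false := by
  simp only [isBin, decide_eq_false_iff_not]
  rintro (h | h)
  · exact hzd h.symm
  · exact hod h.symm

/-- The key extraction lemma: if `$mb$` occurs in `u ++ v` straddling the
boundary, then `mb` is the maximal binary run around the boundary. -/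
lemma extract {z o d : A} (hzd : z ≠ d) (hod : o ≠ d)
    {u v s t mb : List A} (hmb : ∀ x ∈ mb, isBin z o x = true)
    (h : u ++ v = s ++ ((d :: mb) ++ [d]) ++ t)
    (hs : s.length < u.length) (hu : u.length ≤ s.length + mb.length + 1) :
    (u.reverse.takeWhile (isBin z o)).reverse ++ v.takeWhile (isBin z o) = mb := by
  set j : ℕ := u.length - s.length - 1 with hj
  have hjle : j ≤ mb.length := by omega
  have hU : u = s ++ d :: mb.take j := by
    have h1 : u = (s ++ ((d :: mb) ++ [d]) ++ t).take u.length := by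
      rw [← h, List.take_left]
    rw [List.append_assoc, List.take_append,
        List.take_of_length_le (le_of_lt hs)] at h1
    have h2 : ((d :: mb) ++ [d] ++ t).take (u.length - s.length)
        = d :: mb.take j := by
      have hjj : u.length - s.length = j + 1 := by omega
      rw [hjj]
      simp only [List.cons_append, List.append_assoc, List.take_succ_cons,
        List.take_append, Nat.sub_eq_zero_of_le hjle]
      simp
    rw [h1, h2]
  have hV : v = mb.drop j ++ ([d] ++ t) := by
    have h1 : v = (s ++ ((d :: mb) ++ [d]) ++ t).drop u.length := by
      rw [← h, List.drop_left]
    rw [List.append_assoc, List.drop_append,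
        List.drop_eq_nil_of_le (le_of_lt hs), List.nil_append] at h1
    have h2 : ((d :: mb) ++ [d] ++ t).drop (u.length - s.length)
        = mb.drop j ++ ([d] ++ t) := by
      have hjj : u.length - s.length = j + 1 := by omega
      rw [hjj]
      simp only [List.cons_append, List.append_assoc, List.drop_succ_cons,
        List.drop_append, Nat.sub_eq_zero_of_le hjle]
      simp
    rw [h1, h2]
  have hbin_take : ∀ x ∈ (mb.take j).reverse, isBin z o x = true := by
    intro x hx
    exact hmb x (List.mem_of_mem_take (List.mem_reverse.mp hx))
  have hbin_drop : ∀ x ∈ mb.drop j, isBin z o x = true := by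
    intro x hx
    exact hmb x (List.mem_of_mem_drop hx)
  have hr1 : (u.reverse.takeWhile (isBin z o)).reverse = mb.take j := by
    rw [hU]
    have : (s ++ d :: mb.take j).reverse
        = (mb.take j).reverse ++ (d :: s.reverse) := by simp
    rw [this, takeWhile_append_all _ _ _ hbin_take,
        takeWhile_cons_false _ _ _ (isBin_d_false hzd hod)]
    simp
  have hr2 : v.takeWhile (isBin z o) = mb.drop j := by
    rw [hV, takeWhile_append_all _ _ _ hbin_drop]
    rw [show ([d] ++ t) = d :: t by simp,
        takeWhile_cons_false _ _ _ (isBin_d_false hzd hod)]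
    simp
  rw [hr1, hr2, List.take_append_drop]

/-- The binary run around the boundary of the production of a nonterminal. -/
def gOf (z o : A) (W : G.V) : List A :=
  match G.rhs W with
  | Rhs2.horiz Y Z =>
      ((L G Y).reverse.takeWhile (isBin z o)).reverse ++ (L G Z).takeWhile (isBin z o)
  | _ => []

lemma gOf_horiz (z o : A) {W Y Z : G.V} (h : G.rhs W = Rhs2.horiz Y Z) :
    gOf G z o W
      = ((L G Y).reverse.takeWhile (isBin z o)).reverse
        ++ (L G Z).takeWhile (isBin z o) := by
  unfold gOf
  rw [h]

lemma find_boundary (hv : ∀ X Y Z : G.V, G.rhs X ≠ Rhs2.vert Y Z)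
    (m : List A) (hm : 2 ≤ m.length) :
    ∀ (k : ℕ) (X : G.V), G.rank X ≤ k → m <:+: L G X →
    ∃ (W Y Z : G.V), G.rhs W = Rhs2.horiz Y Z ∧
      ∃ s t : List A, L G Y ++ L G Z = s ++ m ++ t ∧ s.length < (L G Y).length ∧
        (L G Y).length < s.length + m.length := by
  intro k
  induction k with
  | zero =>
      intro X hk hocc
      rcases h : G.rhs X with a | ⟨Y, Z⟩ | ⟨Y, Z⟩
      · rw [L_chr G hv h] at hocc
        have := hocc.length_le
        simp at this; omega
      · exact absurd ((G.rank_horiz h).1) (by omega)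
      · exact absurd h (hv X Y Z)
  | succ k ih =>
      intro X hk hocc
      rcases h : G.rhs X with a | ⟨Y, Z⟩ | ⟨Y, Z⟩
      · rw [L_chr G hv h] at hocc
        have := hocc.length_le
        simp at this; omega
      · obtain ⟨h1, h2⟩ := G.rank_horiz h
        rw [L_horiz G hv h] at hocc
        obtain ⟨s, t, heq⟩ := hocc
        by_cases c1 : s.length + m.length ≤ (L G Y).length
        · exact ih Y (by omega) (infix_of_append_left heq.symm c1)
        · by_cases c2 : (L G Y).length ≤ s.length
          · exact ih Z (by omega) (infix_of_append_right heq.symm c2)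
          · exact ⟨X, Y, Z, h, s, t, heq.symm, by omega, by omega⟩
      · exact absurd h (hv X Y Z)

end Aux6

end

/-- Let `Σ` be a finite alphabet containing the three
distinct symbols `0` (`z`), `1` (`o`) and `$` (`d`), let `G` be a 1D SLP
deriving a string `W` over `Σ`, and let `B` be a finite set of nonempty
binary strings such that for every `b ∈ B` the string `$b$` occurs as a
substring of `W`. Then `G` has at least `|B|` nonterminals. -/
theorem distinct_wrapped_blocks_lower_bound (A : Type) (_ : Fintype A)
    (z o d : A) (hzo : z ≠ o) (hzd : z ≠ d) (hod : o ≠ d)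
    (G : SLP2 A) (hwf : G.WF) (h1d : G.OneDim)
    (B : Finset (List Bool)) (hne : ∀ b ∈ B, b ≠ [])
    (hocc : ∀ b ∈ B, dollarWrap z o d b <:+: (G.exp).toList) :
    B.card ≤ G.numNT := by
  classical
  letI := G.fintypeV
  obtain ⟨hv, -⟩ := h1d
  set enc : Bool → A := fun x => if x then o else z with henc
  have henc_inj : Function.Injective enc := by
    intro x y hxy
    simp only [henc] at hxy
    cases x <;> cases y <;> simp only [if_true, if_false, Bool.ite_eq_true_distrib] at hxy
    · rfl
    · exact absurd hxy hzo
    · exact absurd hxy.symm hzo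
    · rfl
  have hex : ∀ b ∈ B, ∃ W : G.V, Aux6.gOf G z o W = b.map enc := by
    intro b hb
    have hocc' : dollarWrap z o d b <:+: Aux6.L G G.start := hocc b hb
    have hlen : 2 ≤ (dollarWrap z o d b).length := by
      simp [dollarWrap]
    obtain ⟨W, Y, Z, hW, s, t, heq, hs, hlt⟩ :=
      Aux6.find_boundary G hv (dollarWrap z o d b) hlen (G.rank G.start) G.start le_rfl hocc'
    refine ⟨W, ?_⟩
    rw [Aux6.gOf_horiz G z o hW]
    have hmb : ∀ x ∈ b.map enc, Aux6.isBin z o x = true := by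
      intro x hx
      obtain ⟨y, -, rfl⟩ := List.mem_map.mp hx
      cases y <;> simp [henc, Aux6.isBin]
    have heq' : Aux6.L G Y ++ Aux6.L G Z = s ++ ((d :: b.map enc) ++ [d]) ++ t := by
      rw [heq]; rfl
    have hdwlen : (dollarWrap z o d b).length = (b.map enc).length + 2 := by
      simp [dollarWrap]
    exact Aux6.extract hzd hod hmb heq' hs (by rw [hdwlen] at hlt; omega)
  let F : {b : List Bool // b ∈ B} → G.V := fun b => (hex b.1 b.2).choose
  have hinj : Function.Injective F := by
    intro b₁ b₂ hF
    have e1 := (hex b₁.1 b₁.2).choose_spec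
    have e2 := (hex b₂.1 b₂.2).choose_spec
    rw [show (hex b₁.1 b₁.2).choose = F b₁ from rfl, hF,
        show F b₂ = (hex b₂.1 b₂.2).choose from rfl] at e1
    rw [e2] at e1
    exact Subtype.ext (List.map_injective_iff.mpr henc_inj e1.symm)
  calc B.card = Fintype.card {b : List Bool // b ∈ B} := (Fintype.card_coe B).symm
    _ ≤ Fintype.card G.V := Fintype.card_le_of_injective F hinj
    _ = G.numNT := rfl
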